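/- (Gowers's spectral lemma) Let G be a finite group of order n, let A ⊆ G, and define the matrix N indexed by G × G with real entries by N(y, x) = 1 if y·x⁻¹ ∈ A and N(y, x) = 0 otherwise. Let δ > 0 be a real number such that every nonzero finite-dimensional real representation of G having no nonzero G-invariant vector has dimension at least δ. Then for every vector v : G → ℝ with ∑_{x ∈ G} v(x) = 0, one has ‖N v‖² ≤ (n·#A/δ)·‖v‖², where ‖·‖ is the Euclidean norm on ℝ^G. -/

import Mathlib

set_option linter.unusedSectionVars false
set_option maxHeartbeats 1000000
open scoped BigOperators
open Module Matrix
namespace GowersAux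
variable {G : Type} [Group G] [Fintype G] [DecidableEq G]

def Mx (A : Finset G) : Matrix G G ℝ := fun y x => if y * x⁻¹ ∈ A then 1 else 0
def Qx (A : Finset G) : Matrix G G ℝ := (Mx A)ᵀ * (Mx A)

lemma sum_ind (A : Finset G) : ∑ z : G, (if z ∈ A then (1:ℝ) else 0) = A.card := by
  simp

lemma Mx_rowsum (A : Finset G) (y : G) : ∑ x : G, Mx A y x = A.card := by
  rw [← sum_ind A]
  exact Fintype.sum_equiv ((Equiv.inv G).trans (Equiv.mulLeft y))
    (fun x => Mx A y x) (fun z => if z ∈ A then (1:ℝ) else 0) (fun x => rfl)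

lemma Mx_colsum (A : Finset G) (x : G) : ∑ y : G, Mx A y x = A.card := by
  rw [← sum_ind A]
  exact Fintype.sum_equiv (Equiv.mulRight x⁻¹)
    (fun y => Mx A y x) (fun z => if z ∈ A then (1:ℝ) else 0) (fun y => rfl)

lemma Qx_apply (A : Finset G) (y x : G) :
    Qx A y x = ∑ z : G, Mx A z y * Mx A z x := by
  simp [Qx, Matrix.mul_apply, Matrix.transpose_apply]

lemma Qx_shift (A : Finset G) (g y x : G) : Qx A (y * g) (x * g) = Qx A y x := by
  rw [Qx_apply, Qx_apply]
  refine (Fintype.sum_equiv (Equiv.mulRight g)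
    (fun z => Mx A z y * Mx A z x) _ fun z => ?_).symm
  simp only [Equiv.coe_mulRight, Mx]
  have h1 : z * g * (y * g)⁻¹ = z * y⁻¹ := by group
  have h2 : z * g * (x * g)⁻¹ = z * x⁻¹ := by group
  simp only [h1, h2]

lemma Qx_shift' (A : Finset G) (g y x : G) : Qx A (y * g) x = Qx A y (x * g⁻¹) := by
  have := Qx_shift A g y (x * g⁻¹)
  simp only [inv_mul_cancel_right] at this
  exact this

lemma Qx_colsum (A : Finset G) (x' : G) :
    ∑ x : G, Qx A x x' = (A.card : ℝ) ^ 2 := by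
  simp only [Qx_apply]
  rw [Finset.sum_comm]
  have : ∀ z : G, ∑ x : G, Mx A z x * Mx A z x' = (A.card : ℝ) * Mx A z x' := by
    intro z
    rw [← Finset.sum_mul, Mx_rowsum]
  rw [Finset.sum_congr rfl fun z _ => this z, ← Finset.mul_sum, Mx_colsum]
  ring

lemma Qx_diag (A : Finset G) (x : G) : Qx A x x = A.card := by
  rw [Qx_apply]
  have : ∀ z : G, Mx A z x * Mx A z x = Mx A z x := by
    intro z; simp only [Mx]; split <;> norm_num
  simp only [this, Mx_colsum]

lemma Qx_trace (A : Finset G) :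
    Matrix.trace (Qx A) = (Fintype.card G : ℝ) * A.card := by
  simp [Matrix.trace, Matrix.diag, Qx_diag, Finset.sum_const, Finset.card_univ]

noncomputable def T (A : Finset G) : EuclideanSpace ℝ G →ₗ[ℝ] EuclideanSpace ℝ G :=
  Matrix.toEuclideanLin (Qx A)

lemma T_apply (A : Finset G) (v : EuclideanSpace ℝ G) (x : G) :
    T A v x = ∑ x' : G, Qx A x x' * v x' := rfl

lemma inner_T (A : Finset G) (v : EuclideanSpace ℝ G) :
    (inner ℝ v (T A v) : ℝ) = ∑ y : G, (∑ x : G, Mx A y x * v x) ^ 2 := by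
  have h0 : (inner ℝ v (T A v) : ℝ) = ∑ x : G, v x * ∑ x' : G, Qx A x x' * v x' := by
    simp [PiLp.inner_apply, RCLike.inner_apply, conj_trivial]
    refine Finset.sum_congr rfl fun x _ => ?_
    rw [mul_comm]; rfl
  rw [h0]
  calc ∑ x : G, v x * ∑ x' : G, Qx A x x' * v x'
      = ∑ x : G, ∑ x' : G, ∑ y : G, (Mx A y x * v x) * (Mx A y x' * v x') := by
        refine Finset.sum_congr rfl fun x _ => ?_
        rw [Finset.mul_sum]
        refine Finset.sum_congr rfl fun x' _ => ?_
        rw [Qx_apply, Finset.sum_mul, Finset.mul_sum]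
        refine Finset.sum_congr rfl fun y _ => ?_
        ring
    _ = ∑ x : G, ∑ y : G, ∑ x' : G, (Mx A y x * v x) * (Mx A y x' * v x') :=
        Finset.sum_congr rfl fun x _ => Finset.sum_comm
    _ = ∑ y : G, ∑ x : G, ∑ x' : G, (Mx A y x * v x) * (Mx A y x' * v x') :=
        Finset.sum_comm
    _ = ∑ y : G, (∑ x : G, Mx A y x * v x) ^ 2 := by
        refine Finset.sum_congr rfl fun y _ => ?_
        rw [sq, Finset.sum_mul_sum]

lemma inner_T_nonneg (A : Finset G) (v : EuclideanSpace ℝ G) :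
    0 ≤ (inner ℝ v (T A v) : ℝ) := by
  rw [inner_T]
  exact Finset.sum_nonneg fun y _ => sq_nonneg _

lemma inner_T_le (A : Finset G) (v : EuclideanSpace ℝ G) :
    (inner ℝ v (T A v) : ℝ) ≤ (Fintype.card G : ℝ) * A.card * ∑ x : G, v x ^ 2 := by
  rw [inner_T]
  have hb : ∀ y : G, (∑ x : G, Mx A y x * v x) ^ 2 ≤ (A.card : ℝ) * ∑ x : G, v x ^ 2 := by
    intro y
    have h := Finset.sum_mul_sq_le_sq_mul_sq Finset.univ (fun x => Mx A y x) (fun x => v x)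
    have hsq : ∑ x : G, (Mx A y x) ^ 2 = (A.card : ℝ) := by
      have he : ∀ x : G, (Mx A y x) ^ 2 = Mx A y x := by
        intro x; simp only [Mx]; split <;> norm_num
      rw [Finset.sum_congr rfl fun x _ => he x, Mx_rowsum]
    rw [hsq] at h
    exact h
  calc ∑ y : G, (∑ x : G, Mx A y x * v x) ^ 2
      ≤ ∑ y : G, (A.card : ℝ) * ∑ x : G, v x ^ 2 :=
        Finset.sum_le_sum fun y _ => hb y
    _ = (Fintype.card G : ℝ) * A.card * ∑ x : G, v x ^ 2 := by
        rw [Finset.sum_const, Finset.card_univ, nsmul_eq_mul]; ring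

lemma T_symm (A : Finset G) : (T A).IsSymmetric := by
  rw [T, ← Matrix.isHermitian_iff_isSymmetric]
  have h := Matrix.isHermitian_conjTranspose_mul_self (Mx A)
  have he : (Mx A)ᴴ = (Mx A)ᵀ := by ext y x; simp [Matrix.conjTranspose_apply]
  rwa [he] at h

lemma T_sum (A : Finset G) (v : EuclideanSpace ℝ G) :
    ∑ x : G, T A v x = (A.card : ℝ) ^ 2 * ∑ x : G, v x := by
  simp only [T_apply]
  rw [Finset.sum_comm]
  have : ∀ x' : G, ∑ x : G, Qx A x x' * v x' = (A.card : ℝ) ^ 2 * v x' := by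
    intro x'; rw [← Finset.sum_mul, Qx_colsum]
  rw [Finset.sum_congr rfl fun x' _ => this x', ← Finset.mul_sum]

lemma T_trace (A : Finset G) :
    LinearMap.trace ℝ (EuclideanSpace ℝ G) (T A) = (Fintype.card G : ℝ) * A.card := by
  rw [LinearMap.trace_eq_matrix_trace ℝ (PiLp.basisFun 2 ℝ G) (T A)]
  have : LinearMap.toMatrix (PiLp.basisFun 2 ℝ G) (PiLp.basisFun 2 ℝ G) (T A) = Qx A := by
    rw [T, Matrix.toEuclideanLin_eq_toLin, LinearMap.toMatrix_toLin]
  rw [this, Qx_trace]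

def rt (g : G) : EuclideanSpace ℝ G →ₗ[ℝ] EuclideanSpace ℝ G where
  toFun v := WithLp.toLp 2 (fun x => v (x * g))
  map_add' u w := rfl
  map_smul' c u := rfl

lemma rt_apply (g : G) (v : EuclideanSpace ℝ G) (x : G) : rt g v x = v (x * g) := rfl

lemma rt_sum (g : G) (v : EuclideanSpace ℝ G) : ∑ x : G, rt g v x = ∑ x : G, v x :=
  Fintype.sum_equiv (Equiv.mulRight g) _ _ fun x => rfl

lemma T_comm (A : Finset G) (g : G) (v : EuclideanSpace ℝ G) :
    T A (rt g v) = rt g (T A v) := by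
  ext x
  have hl : T A (rt g v) x = ∑ x' : G, Qx A x x' * v (x' * g) := rfl
  have hr : rt g (T A v) x = ∑ x' : G, Qx A (x * g) x' * v x' := rfl
  rw [hl, hr]
  refine Fintype.sum_equiv (Equiv.mulRight g)
    (fun x' => Qx A x x' * v (x' * g)) (fun w => Qx A (x * g) w * v w) fun x' => ?_
  simp only [Equiv.coe_mulRight]
  rw [Qx_shift' A g x (x' * g), mul_inv_cancel_right]


noncomputable def sumF : EuclideanSpace ℝ G →ₗ[ℝ] ℝ where
  toFun u := ∑ x : G, u x
  map_add' u w := by simp [Finset.sum_add_distrib]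
  map_smul' c u := by simp [Finset.mul_sum]

theorem key (A : Finset G) (δ : ℝ) (hδ : 0 < δ)
    (hrep : ∀ (V : Type) [AddCommGroup V] [Module ℝ V] [FiniteDimensional ℝ V]
      (ρ : Representation ℝ G V), Nontrivial V →
      (∀ v : V, (∀ g : G, ρ g v = v) → v = 0) →
      δ ≤ Module.finrank ℝ V) [Nontrivial G] :
    ∀ v : EuclideanSpace ℝ G, (∑ x : G, v x) = 0 →
      (inner ℝ v (T A v) : ℝ) ≤ ((Fintype.card G : ℝ) * A.card / δ) * ∑ x : G, v x ^ 2 := by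
  classical
  set W : Submodule ℝ (EuclideanSpace ℝ G) := LinearMap.ker (sumF (G := G)) with hW
  have memW : ∀ u : EuclideanSpace ℝ G, u ∈ W ↔ ∑ x : G, u x = 0 := fun u => Iff.rfl
  have hnormsq : ∀ u : EuclideanSpace ℝ G, (∑ x : G, u x ^ 2) = ‖u‖ ^ 2 := by
    intro u
    rw [← real_inner_self_eq_norm_sq]
    simp only [PiLp.inner_apply, RCLike.inner_apply, conj_trivial, sq]
  have hTW : ∀ u ∈ W, T A u ∈ W := by
    intro u hu
    rw [memW] at hu ⊢
    rw [T_sum, hu, mul_zero]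
  set T' : W →ₗ[ℝ] W := (T A).restrict hTW with hT'
  have hT'sym : T'.IsSymmetric := (T_symm A).restrict_invariant hTW
  obtain ⟨a, b, hab⟩ := exists_pair_ne G
  have hnontriv : Nontrivial W := by
    refine ⟨⟨⟨WithLp.toLp 2 (fun x => (if x = a then 1 else 0) - (if x = b then 1 else 0) : G → ℝ), ?_⟩, 0, ?_⟩⟩
    · rw [memW]
      simp [Finset.sum_sub_distrib]
    · intro h
      have h2 := congrArg (fun w : W => (w : EuclideanSpace ℝ G) a) h
      simp [hab] at h2
  haveI := hnontriv
  set lam : ℝ := ⨆ x : { x : W // x ≠ 0 },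
      RCLike.re (inner ℝ (T' x) (x : W) : ℝ) / ‖(x : W)‖ ^ 2 with hlam
  have heig : Module.End.HasEigenvalue T' lam := by
    have h := hT'sym.hasEigenvalue_iSup_of_finiteDimensional
    exact h
  have hinner' : ∀ w : W, (inner ℝ (T' w) w : ℝ)
      = (inner ℝ ((w : EuclideanSpace ℝ G)) (T A ((w : EuclideanSpace ℝ G))) : ℝ) := by
    intro w
    rw [Submodule.coe_inner, LinearMap.restrict_coe_apply, real_inner_comm]
  have hray : ∀ w : W, (inner ℝ ((w : EuclideanSpace ℝ G)) (T A ((w : EuclideanSpace ℝ G))) : ℝ)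
      ≤ lam * ‖(w : EuclideanSpace ℝ G)‖ ^ 2 := by
    intro w
    rcases eq_or_ne w 0 with rfl | h
    · simp
    · have hb : BddAbove (Set.range fun x : { x : W // x ≠ 0 } =>
          RCLike.re (inner ℝ (T' x) (x : W) : ℝ) / ‖(x : W)‖ ^ 2) := by
        refine ⟨(Fintype.card G : ℝ) * A.card, ?_⟩
        rintro r ⟨⟨x, hx⟩, rfl⟩
        have hxE : ((x : EuclideanSpace ℝ G)) ≠ 0 := by
          simpa [Submodule.coe_eq_zero] using hx
        have hx0 : (0:ℝ) < ‖(x : EuclideanSpace ℝ G)‖ ^ 2 := by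
          have : ‖(x : EuclideanSpace ℝ G)‖ ≠ 0 := norm_ne_zero_iff.mpr hxE
          positivity
        simp only [RCLike.re_to_real]
        rw [hinner']
        have hnx : ‖(x : W)‖ = ‖(x : EuclideanSpace ℝ G)‖ := rfl
        rw [hnx, div_le_iff₀ hx0]
        calc (inner ℝ ((x : EuclideanSpace ℝ G)) (T A ((x : EuclideanSpace ℝ G))) : ℝ)
            ≤ (Fintype.card G : ℝ) * A.card * ∑ z : G, (x : EuclideanSpace ℝ G) z ^ 2 :=
              inner_T_le A _
          _ = (Fintype.card G : ℝ) * A.card * ‖(x : EuclideanSpace ℝ G)‖ ^ 2 := by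
              rw [hnormsq]
      have hle := le_ciSup hb (⟨w, h⟩ : { x : W // x ≠ 0 })
      rw [← hlam] at hle
      have hcoe : ((⟨w, h⟩ : { x : W // x ≠ 0 }) : W) = w := rfl
      have hw0 : (0:ℝ) < ‖w‖ ^ 2 := by
        have : ‖w‖ ≠ 0 := norm_ne_zero_iff.mpr h
        positivity
      rw [hcoe, RCLike.re_to_real, hinner', div_le_iff₀ hw0] at hle
      exact hle
  -- the eigenspace as a representation of G
  set Elam : Submodule ℝ W := Module.End.eigenspace T' lam with hElam
  haveI hEnt : Nontrivial Elam := Submodule.nontrivial_iff_ne_bot.mpr heig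
  have hrtW : ∀ g : G, ∀ u ∈ W, rt g u ∈ W := by
    intro g u hu
    rw [memW] at hu ⊢
    rw [rt_sum]; exact hu
  set rtW : G → (W →ₗ[ℝ] W) := fun g => (rt g).restrict (hrtW g) with hrtWdef
  have hcommW : ∀ g : G, ∀ w : W, T' (rtW g w) = rtW g (T' w) := by
    intro g w
    exact Subtype.ext (T_comm A g (w : EuclideanSpace ℝ G))
  have hrtE : ∀ g : G, ∀ u ∈ Elam, rtW g u ∈ Elam := by
    intro g u hu
    rw [hElam, Module.End.mem_eigenspace_iff] at hu ⊢
    rw [hcommW g u, hu]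
    exact (rtW g).map_smul lam u
  set ρf : G → (Elam →ₗ[ℝ] Elam) := fun g => (rtW g).restrict (hrtE g) with hρf
  have hEext : ∀ u w : Elam,
      (((u : W)) : EuclideanSpace ℝ G) = ((w : W) : EuclideanSpace ℝ G) → u = w :=
    fun u w h => Subtype.ext (Subtype.ext h)
  let ρ : Representation ℝ G Elam :=
    { toFun := ρf
      map_one' := by
        refine LinearMap.ext fun u => hEext _ _ ?_
        ext x
        show ((u : W) : EuclideanSpace ℝ G) (x * 1) = ((u : W) : EuclideanSpace ℝ G) x
        rw [mul_one]
      map_mul' := fun g h => by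
        refine LinearMap.ext fun u => hEext _ _ ?_
        ext x
        show ((u : W) : EuclideanSpace ℝ G) (x * (g * h))
          = ((u : W) : EuclideanSpace ℝ G) (x * g * h)
        rw [mul_assoc] }
  have hcard0 : (0:ℝ) < (Fintype.card G : ℝ) := by exact_mod_cast Fintype.card_pos
  have hinv0 : ∀ u : Elam, (∀ g : G, ρ g u = u) → u = 0 := by
    intro u hu
    have hfix : ∀ x g : G,
        ((u : W) : EuclideanSpace ℝ G) (x * g) = ((u : W) : EuclideanSpace ℝ G) x := by
      intro x g
      exact congrArg (fun w : Elam => ((w : W) : EuclideanSpace ℝ G) x) (hu g)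
    have hconst : ∀ g : G,
        ((u : W) : EuclideanSpace ℝ G) g = ((u : W) : EuclideanSpace ℝ G) 1 := by
      intro g
      have := hfix 1 g
      rwa [one_mul] at this
    have hsum : ∑ x : G, ((u : W) : EuclideanSpace ℝ G) x = 0 := (memW _).mp (u : W).2
    rw [Finset.sum_congr rfl fun x _ => hconst x, Finset.sum_const, Finset.card_univ,
      nsmul_eq_mul] at hsum
    have h1 : ((u : W) : EuclideanSpace ℝ G) 1 = 0 := by
      rcases mul_eq_zero.mp hsum with h | h
      · exact absurd h (ne_of_gt hcard0)
      · exact h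
    refine hEext _ _ ?_
    ext x
    show ((u : W) : EuclideanSpace ℝ G) x = 0
    rw [hconst x, h1]
  have hdim : δ ≤ (finrank ℝ Elam : ℝ) := hrep Elam ρ hEnt hinv0
  -- trace estimate
  set d := finrank ℝ Elam with hd
  have hd1 : 0 < d := Module.finrank_pos_iff.mpr hEnt
  have hdn : d ≤ Fintype.card G := by
    have h1 : d ≤ finrank ℝ W := Submodule.finrank_le Elam
    have h2 : finrank ℝ W ≤ finrank ℝ (EuclideanSpace ℝ G) := Submodule.finrank_le W
    have h3 : finrank ℝ (EuclideanSpace ℝ G) = Fintype.card G := finrank_euclideanSpace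
    omega
  let ob : OrthonormalBasis (Fin d) ℝ Elam := stdOrthonormalBasis ℝ Elam
  let emb : Elam → EuclideanSpace ℝ G := fun w => ((w : W) : EuclideanSpace ℝ G)
  let vfam : Fin (Fintype.card G) → EuclideanSpace ℝ G :=
    fun i => if h : (i : ℕ) < d then emb (ob ⟨i, h⟩) else 0
  let sV : Set (Fin (Fintype.card G)) := {i | (i : ℕ) < d}
  have hON : Orthonormal ℝ (sV.restrict vfam) := by
    rw [orthonormal_iff_ite]
    rintro ⟨i, hi⟩ ⟨j, hj⟩
    have hi' : (i : ℕ) < d := hi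
    have hj' : (j : ℕ) < d := hj
    have hval : (inner ℝ (sV.restrict vfam ⟨i, hi⟩) (sV.restrict vfam ⟨j, hj⟩) : ℝ)
        = (inner ℝ (ob ⟨i, hi'⟩) (ob ⟨j, hj'⟩) : ℝ) := by
      simp only [Set.restrict_apply, vfam, dif_pos hi', dif_pos hj']
      show inner ℝ (vfam i) (vfam j) = _
      simp only [vfam, dif_pos hi', dif_pos hj']
      rfl
    rw [hval, orthonormal_iff_ite.mp ob.orthonormal]
    by_cases hij : i = j
    · subst hij; simp
    · have h1 : (⟨(i : ℕ), hi'⟩ : Fin d) ≠ ⟨(j : ℕ), hj'⟩ := by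
        intro hctr
        have hv : ((⟨(i : ℕ), hi'⟩ : Fin d) : ℕ) = ((⟨(j : ℕ), hj'⟩ : Fin d) : ℕ) :=
          congrArg Fin.val hctr
        exact hij (Fin.ext hv)
      have h2 : (⟨i, hi⟩ : sV) ≠ ⟨j, hj⟩ := fun hctr => hij (congrArg Subtype.val hctr)
      rw [if_neg h1, if_neg h2]
  obtain ⟨bb, hbb⟩ := hON.exists_orthonormalBasis_extension_of_card_eq
    (by simp [finrank_euclideanSpace])
  have htr2 : ∑ i : Fin (Fintype.card G), (inner ℝ (bb i) (T A (bb i)) : ℝ)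
      = (Fintype.card G : ℝ) * A.card := by
    have h1 : LinearMap.trace ℝ (EuclideanSpace ℝ G) (T A)
        = ∑ i : Fin (Fintype.card G), (inner ℝ (bb i) (T A (bb i)) : ℝ) := by
      rw [LinearMap.trace_eq_matrix_trace ℝ bb.toBasis (T A), Matrix.trace]
      refine Finset.sum_congr rfl fun i _ => ?_
      rw [Matrix.diag_apply, LinearMap.toMatrix_apply, OrthonormalBasis.coe_toBasis,
        OrthonormalBasis.coe_toBasis_repr_apply, OrthonormalBasis.repr_apply_apply]
    rw [← h1, T_trace]
  have hterm : ∀ (i : Fin (Fintype.card G)) (h : (i : ℕ) < d),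
      (inner ℝ (bb i) (T A (bb i)) : ℝ) = lam := by
    intro i h
    have hbi : bb i = emb (ob ⟨i, h⟩) := by
      have hh := hbb i h
      rw [hh]
      simp only [vfam, dif_pos h]
    have heigv : T A (emb (ob ⟨i, h⟩)) = lam • emb (ob ⟨i, h⟩) := by
      have hmem2 : T' ((ob ⟨i, h⟩ : Elam) : W) = lam • ((ob ⟨i, h⟩ : Elam) : W) :=
        Module.End.mem_eigenspace_iff.mp (ob ⟨i, h⟩).2
      exact congrArg (fun w : W => (w : EuclideanSpace ℝ G)) hmem2
    have hn1 : ‖emb (ob ⟨i, h⟩)‖ = 1 := ob.orthonormal.1 ⟨i, h⟩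
    rw [hbi, heigv, real_inner_smul_right, real_inner_self_eq_norm_sq, hn1]
    norm_num
  have hF : (Finset.univ.filter (fun i : Fin (Fintype.card G) => (i : ℕ) < d)).card = d := by
    have h1 : (Finset.univ.filter (fun i : Fin (Fintype.card G) => (i : ℕ) < d)).card
        = (Finset.univ : Finset (Fin d)).card := by
      refine Finset.card_bij' (fun a ha => ⟨(a : ℕ), (Finset.mem_filter.mp ha).2⟩)
        (fun b _ => ⟨(b : ℕ), lt_of_lt_of_le b.isLt hdn⟩) ?_ ?_ ?_ ?_
      · intro a ha; exact Finset.mem_univ _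
      · intro b hb; simp [b.isLt]
      · intro a ha; rfl
      · intro b hb; rfl
    rw [h1, Finset.card_univ, Fintype.card_fin]
  have hsum_ge : lam * d ≤ (Fintype.card G : ℝ) * A.card := by
    rw [← htr2]
    have hle1 : ∑ i ∈ Finset.univ.filter (fun i : Fin (Fintype.card G) => (i : ℕ) < d),
        (inner ℝ (bb i) (T A (bb i)) : ℝ)
        ≤ ∑ i : Fin (Fintype.card G), (inner ℝ (bb i) (T A (bb i)) : ℝ) :=
      Finset.sum_le_sum_of_subset_of_nonneg (Finset.filter_subset _ _)
        (fun i _ _ => inner_T_nonneg A (bb i))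
    have heq : ∑ i ∈ Finset.univ.filter (fun i : Fin (Fintype.card G) => (i : ℕ) < d),
        (inner ℝ (bb i) (T A (bb i)) : ℝ) = lam * d := by
      rw [Finset.sum_congr rfl (fun i hi => hterm i (Finset.mem_filter.mp hi).2),
        Finset.sum_const, hF, nsmul_eq_mul, mul_comm]
    linarith
  have hlam0 : 0 ≤ lam := by
    have hiz : ((⟨0, lt_of_lt_of_le hd1 hdn⟩ : Fin (Fintype.card G)) : ℕ) < d := hd1
    have := hterm ⟨0, lt_of_lt_of_le hd1 hdn⟩ hiz
    rw [← this]
    exact inner_T_nonneg A _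
  have hlamle : lam ≤ (Fintype.card G : ℝ) * A.card / δ := by
    rw [le_div_iff₀ hδ]
    have h1 : lam * δ ≤ lam * d := by
      apply mul_le_mul_of_nonneg_left ?_ hlam0
      exact hdim
    linarith
  -- conclusion
  intro v hv
  have hvW : v ∈ W := (memW v).mpr hv
  have h2 := hray ⟨v, hvW⟩
  have hco : ((⟨v, hvW⟩ : W) : EuclideanSpace ℝ G) = v := rfl
  rw [hco] at h2
  calc (inner ℝ v (T A v) : ℝ) ≤ lam * ‖v‖ ^ 2 := h2
    _ ≤ ((Fintype.card G : ℝ) * A.card / δ) * ‖v‖ ^ 2 := by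
        apply mul_le_mul_of_nonneg_right hlamle (by positivity)
    _ = ((Fintype.card G : ℝ) * A.card / δ) * ∑ x : G, v x ^ 2 := by rw [hnormsq]

end GowersAux



/-- Gowers's spectral lemma: let `G` be a finite group of order `n`, `A ⊆ G`,
and `N` the bipartite Cayley graph matrix `N(y,x) = 1` iff `y·x⁻¹ ∈ A`. If
every nonzero finite-dimensional real representation of `G` with no nonzero
invariant vector has dimension at least `δ > 0`, then for every `v : G → ℝ`
with `∑ x, v x = 0` one has `‖N v‖² ≤ (n·#A/δ)·‖v‖²`. -/
theorem gowers_spectral_lemma {G : Type} [Group G] [Fintype G] [DecidableEq G]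
    (A : Finset G) (δ : ℝ) (hδ : 0 < δ)
    (hrep : ∀ (V : Type) [AddCommGroup V] [Module ℝ V] [FiniteDimensional ℝ V]
      (ρ : Representation ℝ G V), Nontrivial V →
      (∀ v : V, (∀ g : G, ρ g v = v) → v = 0) →
      δ ≤ Module.finrank ℝ V) :
    ∀ v : G → ℝ, (∑ x : G, v x) = 0 →
      (∑ y : G, (∑ x : G, (if y * x⁻¹ ∈ A then (1 : ℝ) else 0) * v x) ^ 2)
        ≤ (Fintype.card G * A.card / δ) * ∑ x : G, (v x) ^ 2 := by
  intro v hv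
  rcases subsingleton_or_nontrivial G with hG | hG
  · have hcard : Fintype.card G = 1 := by
      have h1 : Fintype.card G ≤ 1 := Fintype.card_le_one_iff_subsingleton.mpr hG
      have h2 : 0 < Fintype.card G := Fintype.card_pos
      omega
    have hz : ∀ x : G, v x = 0 := by
      intro x
      have he : ∀ y : G, v y = v x := fun y => congrArg v (Subsingleton.elim y x)
      rw [Finset.sum_congr rfl fun y _ => he y, Finset.sum_const, Finset.card_univ,
        hcard, one_nsmul] at hv
      exact hv
    simp [hz]
  · have h := GowersAux.key A δ hδ hrep ((WithLp.equiv 2 (G → ℝ)).symm v) hv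
    rw [GowersAux.inner_T] at h
    exact h
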